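/- For every R > 0 there exists A > 0 such that |B(t + iη)| ≤ A η^{−1} e^{t/R} for all t > 0 and all η ∈ (0, √π/2). -/

import Mathlib

open MeasureTheory Filter

/-- The Borel transform `B(t) = (2√π t cot(2√π t) - 1 + (4π/3)t²)/(8π² t³)`. -/
noncomputable def borelB (t : ℂ) : ℂ :=
  (2 * (Real.sqrt Real.pi : ℂ) * t * Complex.cot (2 * (Real.sqrt Real.pi : ℂ) * t)
      - 1 + 4 * (Real.pi : ℂ) * t ^ 2 / 3) / (8 * (Real.pi : ℂ) ^ 2 * t ^ 3)

lemma aux_exp2 {x : ℂ} (hx : ‖x‖ ≤ 1) :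
    ‖Complex.exp x - (1 + x)‖ ≤ 3/4 * ‖x‖ ^ 2 := by
  have h := Complex.exp_bound hx (by norm_num : 0 < 2)
  have hs : (∑ m ∈ Finset.range 2, x ^ m / m.factorial) = 1 + x := by
    simp [Finset.sum_range_succ]
  rw [hs] at h
  calc ‖Complex.exp x - (1 + x)‖
      ≤ ‖x‖ ^ 2 * ((2 : ℕ).succ * (((2:ℕ).factorial * 2 : ℕ) : ℝ)⁻¹) := by
        convert h using 3 <;> norm_num
    _ = 3/4 * ‖x‖ ^ 2 := by norm_num [Nat.factorial]; ring

lemma aux_exp3 {x : ℂ} (hx : ‖x‖ ≤ 1) :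
    ‖Complex.exp x - (1 + x + x^2/2)‖ ≤ 2/9 * ‖x‖ ^ 3 := by
  have h := Complex.exp_bound hx (by norm_num : 0 < 3)
  have hs : (∑ m ∈ Finset.range 3, x ^ m / m.factorial) = 1 + x + x^2/2 := by
    simp [Finset.sum_range_succ, Nat.factorial]
  rw [hs] at h
  calc ‖Complex.exp x - (1 + x + x^2/2)‖
      ≤ ‖x‖ ^ 3 * ((3 : ℕ).succ * (((3:ℕ).factorial * 3 : ℕ) : ℝ)⁻¹) := by
        convert h using 3 <;> norm_num
    _ = 2/9 * ‖x‖ ^ 3 := by norm_num [Nat.factorial]; ring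

lemma aux_sin_sub {w : ℂ} (hw : ‖w‖ ≤ 1) :
    ‖Complex.sin w - w‖ ≤ 2/9 * ‖w‖ ^ 3 := by
  have hwi : ‖w * Complex.I‖ ≤ 1 := by simpa using hw
  have hwi' : ‖-w * Complex.I‖ ≤ 1 := by simpa using hw
  have ha := aux_exp3 hwi
  have hb := aux_exp3 hwi'
  have e1 : ‖w * Complex.I‖ = ‖w‖ := by simp
  have e2 : ‖-w * Complex.I‖ = ‖w‖ := by simp
  rw [e1] at ha; rw [e2] at hb
  have hs : Complex.sin w = (Complex.exp (-w * Complex.I) - Complex.exp (w * Complex.I)) * Complex.I / 2 := rfl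
  have hid : Complex.sin w - w =
      ((Complex.exp (-w * Complex.I) - (1 + (-w * Complex.I) + (-w * Complex.I)^2/2))
        - (Complex.exp (w * Complex.I) - (1 + w * Complex.I + (w * Complex.I)^2/2))) * Complex.I / 2 := by
    rw [hs]; linear_combination (-w) * Complex.I_sq
  rw [hid, norm_div, norm_mul]
  simp only [Complex.norm_I, Complex.norm_two, mul_one]
  have htri := norm_sub_le
    (Complex.exp (-w * Complex.I) - (1 + (-w * Complex.I) + (-w * Complex.I)^2/2))
    (Complex.exp (w * Complex.I) - (1 + w * Complex.I + (w * Complex.I)^2/2))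
  linarith

lemma aux_cos_sub {w : ℂ} (hw : ‖w‖ ≤ 1) :
    ‖Complex.cos w - 1‖ ≤ 3/4 * ‖w‖ ^ 2 := by
  have hwi : ‖w * Complex.I‖ ≤ 1 := by simpa using hw
  have hwi' : ‖-w * Complex.I‖ ≤ 1 := by simpa using hw
  have ha := aux_exp2 hwi
  have hb := aux_exp2 hwi'
  have e1 : ‖w * Complex.I‖ = ‖w‖ := by simp
  have e2 : ‖-w * Complex.I‖ = ‖w‖ := by simp
  rw [e1] at ha; rw [e2] at hb
  have hs : Complex.cos w = (Complex.exp (w * Complex.I) + Complex.exp (-w * Complex.I)) / 2 := rfl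
  have hid : Complex.cos w - 1 =
      ((Complex.exp (w * Complex.I) - (1 + w * Complex.I))
        + (Complex.exp (-w * Complex.I) - (1 + -w * Complex.I))) / 2 := by
    rw [hs]; ring
  rw [hid, norm_div]
  simp only [Complex.norm_two]
  have htri := norm_add_le
    (Complex.exp (w * Complex.I) - (1 + w * Complex.I))
    (Complex.exp (-w * Complex.I) - (1 + -w * Complex.I))
  linarith

lemma aux_abs_sin_lower {w : ℂ} : Real.sinh w.im ≤ ‖Complex.sin w‖ := by
  have hs : Complex.sin w = (Complex.exp (-w * Complex.I) - Complex.exp (w * Complex.I)) * Complex.I / 2 := rfl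
  rw [hs, norm_div, norm_mul]
  simp only [Complex.norm_I, Complex.norm_two, mul_one]
  have h1 : ‖Complex.exp (-w * Complex.I)‖ = Real.exp w.im := by
    rw [Complex.norm_exp]; congr 1; simp [Complex.mul_re]
  have h2 : ‖Complex.exp (w * Complex.I)‖ = Real.exp (-w.im) := by
    rw [Complex.norm_exp]; congr 1; simp [Complex.mul_re]
  have htri : ‖Complex.exp (-w * Complex.I)‖ - ‖Complex.exp (w * Complex.I)‖
      ≤ ‖Complex.exp (-w * Complex.I) - Complex.exp (w * Complex.I)‖ := by
    have h := norm_add_le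
      (Complex.exp (-w * Complex.I) - Complex.exp (w * Complex.I)) (Complex.exp (w * Complex.I))
    rw [sub_add_cancel] at h
    linarith
  rw [h1, h2] at htri
  rw [Real.sinh_eq]
  linarith

lemma aux_abs_cos_upper {w : ℂ} : ‖Complex.cos w‖ ≤ Real.cosh w.im := by
  have hs : Complex.cos w = (Complex.exp (w * Complex.I) + Complex.exp (-w * Complex.I)) / 2 := rfl
  rw [hs, norm_div]
  simp only [Complex.norm_two]
  have h1 : ‖Complex.exp (-w * Complex.I)‖ = Real.exp w.im := by
    rw [Complex.norm_exp]; congr 1; simp [Complex.mul_re]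
  have h2 : ‖Complex.exp (w * Complex.I)‖ = Real.exp (-w.im) := by
    rw [Complex.norm_exp]; congr 1; simp [Complex.mul_re]
  have htri := norm_add_le (Complex.exp (w * Complex.I)) (Complex.exp (-w * Complex.I))
  rw [Real.cosh_eq]
  rw [h1, h2] at htri
  linarith


lemma aux_F_small {w : ℂ} (hsmall : ‖w‖ ≤ 1) (h0 : 0 < ‖w‖) :
    ‖w * Complex.cot w - 1 + w ^ 2 / 3‖ ≤ 2 * ‖w‖ ^ 2 := by
  have hcube : ‖w‖ ^ 3 ≤ ‖w‖ := by
    simpa using pow_le_pow_of_le_one (norm_nonneg w) hsmall (by norm_num : 1 ≤ 3)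
  have h := aux_sin_sub hsmall
  have hsinlb : 7/9 * ‖w‖ ≤ ‖Complex.sin w‖ := by
    have htri := norm_add_le (w - Complex.sin w) (Complex.sin w)
    rw [sub_add_cancel, norm_sub_rev] at htri
    linarith
  have hsinub : ‖Complex.sin w‖ ≤ 11/9 * ‖w‖ := by
    have htri := norm_add_le (Complex.sin w - w) w
    rw [sub_add_cancel] at htri
    linarith
  have hsin0 : Complex.sin w ≠ 0 := by
    intro hzero
    rw [hzero, norm_zero] at hsinlb
    nlinarith
  have hFN : w * Complex.cot w - 1 + w ^ 2 / 3
      = (w * Complex.cos w - Complex.sin w + w ^ 2 / 3 * Complex.sin w) / Complex.sin w := by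
    rw [eq_div_iff hsin0, Complex.cot_eq_cos_div_sin]
    field_simp
  have hN : ‖w * Complex.cos w - Complex.sin w + w ^ 2 / 3 * Complex.sin w‖
      ≤ 3/2 * ‖w‖ ^ 3 := by
    have hid : w * Complex.cos w - Complex.sin w + w ^ 2 / 3 * Complex.sin w
        = w * (Complex.cos w - 1) + -(Complex.sin w - w) + w ^ 2 / 3 * Complex.sin w := by ring
    rw [hid]
    have t1 := norm_add_le (w * (Complex.cos w - 1) + -(Complex.sin w - w))
      (w ^ 2 / 3 * Complex.sin w)
    have t2 := norm_add_le (w * (Complex.cos w - 1)) (-(Complex.sin w - w))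
    rw [norm_neg] at t2
    have b1 : ‖w * (Complex.cos w - 1)‖ ≤ ‖w‖ * (3/4 * ‖w‖ ^ 2) := by
      rw [norm_mul]
      exact mul_le_mul_of_nonneg_left (aux_cos_sub hsmall) (norm_nonneg w)
    have b3 : ‖w ^ 2 / 3 * Complex.sin w‖ ≤ ‖w‖ ^ 2 / 3 * (11/9 * ‖w‖) := by
      rw [norm_mul, norm_div, norm_pow]
      have h3 : ‖(3 : ℂ)‖ = 3 := by norm_num
      rw [h3]
      exact mul_le_mul_of_nonneg_left hsinub (by positivity)
    nlinarith [norm_nonneg w, pow_nonneg (norm_nonneg w) 2]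
  rw [hFN, norm_div]
  have hsinpos : 0 < ‖Complex.sin w‖ := norm_pos_iff.mpr hsin0
  rw [div_le_iff₀ hsinpos]
  calc ‖w * Complex.cos w - Complex.sin w + w ^ 2 / 3 * Complex.sin w‖
      ≤ 3/2 * ‖w‖ ^ 3 := hN
    _ ≤ 2 * ‖w‖ ^ 2 * (7/9 * ‖w‖) := by nlinarith [norm_nonneg w]
    _ ≤ 2 * ‖w‖ ^ 2 * ‖Complex.sin w‖ :=
        mul_le_mul_of_nonneg_left hsinlb (by positivity)

lemma aux_cot_bound {w : ℂ} (hb : 0 < w.im) :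
    ‖Complex.cot w‖ ≤ 1 + 1 / w.im := by
  have hsinh0 : 0 < Real.sinh w.im := Real.sinh_pos_iff.mpr hb
  rw [Complex.cot_eq_cos_div_sin, norm_div]
  have hsl := aux_abs_sin_lower (w := w)
  have hcu := aux_abs_cos_upper (w := w)
  have hs0 : 0 < ‖Complex.sin w‖ := lt_of_lt_of_le hsinh0 hsl
  rw [div_le_iff₀ hs0]
  have key : Real.cosh w.im ≤ (1 + 1 / w.im) * Real.sinh w.im := by
    have hcs : Real.cosh w.im - Real.sinh w.im = Real.exp (-w.im) := Real.cosh_sub_sinh w.im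
    have he1 : Real.exp (-w.im) ≤ 1 := Real.exp_le_one_iff.mpr (by linarith)
    have hss : w.im ≤ Real.sinh w.im := Real.self_le_sinh_iff.mpr hb.le
    have expand : (1 + 1 / w.im) * Real.sinh w.im
        = Real.sinh w.im + Real.sinh w.im / w.im := by ring
    rw [expand]
    have : 1 ≤ Real.sinh w.im / w.im := (one_le_div hb).mpr hss
    nlinarith
  calc ‖Complex.cos w‖ ≤ Real.cosh w.im := hcu
    _ ≤ (1 + 1 / w.im) * Real.sinh w.im := key
    _ ≤ (1 + 1 / w.im) * ‖Complex.sin w‖ := by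
        apply mul_le_mul_of_nonneg_left hsl
        positivity

lemma borelB_key {t η : ℝ} (ht : 0 < t) (h1 : 0 < η) (h2 : η < Real.sqrt Real.pi / 2) :
    ‖borelB ((t : ℂ) + (η : ℂ) * Complex.I)‖ ≤ 2 / η := by
  obtain ⟨q, hqdef⟩ : ∃ q : ℝ, q = Real.sqrt Real.pi := ⟨_, rfl⟩
  have hπ : 0 < Real.pi := Real.pi_pos
  have hq0 : 0 < q := hqdef ▸ Real.sqrt_pos.mpr hπ
  have hq2 : q ^ 2 = Real.pi := hqdef ▸ Real.sq_sqrt hπ.le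
  have hq1 : 1 ≤ q := by nlinarith [Real.pi_gt_three]
  rw [← hqdef] at h2
  obtain ⟨z, hzdef⟩ : ∃ z : ℂ, z = (t : ℂ) + (η : ℂ) * Complex.I := ⟨_, rfl⟩
  have hzim : z.im = η := by simp [hzdef]
  have haz : η ≤ ‖z‖ := by
    have := Complex.abs_im_le_norm z
    rwa [hzim, abs_of_pos h1] at this
  obtain ⟨az, hazdef⟩ : ∃ az : ℝ, az = ‖z‖ := ⟨_, rfl⟩
  rw [← hazdef] at haz
  have haz0 : 0 < az := lt_of_lt_of_le h1 haz
  obtain ⟨w, hwdef⟩ : ∃ w : ℂ, w = 2 * (q : ℂ) * z := ⟨_, rfl⟩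
  have hwim : w.im = 2 * q * η := by
    simp [hwdef, hzim, Complex.mul_im]
  have hwabs : ‖w‖ = 2 * q * az := by
    rw [hwdef, hazdef, norm_mul, norm_mul]
    simp [Complex.norm_real, abs_of_pos hq0]
  have hq2c : ((q : ℂ)) ^ 2 = (Real.pi : ℂ) := by
    exact_mod_cast congrArg (fun x : ℝ => (x : ℂ)) hq2
  have hz0 : z ≠ 0 := by
    intro h
    have : az = 0 := by rw [hazdef, h, norm_zero]
    linarith
  have hB : borelB z = (w * Complex.cot w - 1 + w ^ 2 / 3) / (8 * (Real.pi : ℂ) ^ 2 * z ^ 3) := by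
    rw [borelB, ← hqdef, hwdef]
    congr 2
    rw [← hq2c]
    ring
  have hDen : ‖8 * (Real.pi : ℂ) ^ 2 * z ^ 3‖ = 8 * Real.pi ^ 2 * az ^ 3 := by
    rw [norm_mul, norm_mul, norm_pow, norm_pow, hazdef]
    simp [Complex.norm_real, abs_of_pos hπ]
  rw [← hzdef, hB, norm_div, hDen]
  have hDpos : 0 < 8 * Real.pi ^ 2 * az ^ 3 := by positivity
  rw [div_le_div_iff₀ hDpos h1]
  have hπq : Real.pi ^ 2 = q ^ 4 := by nlinarith
  rcases le_or_gt (‖w‖) 1 with hsmall | hbig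
  · -- small case
    have hw0 : 0 < ‖w‖ := by rw [hwabs]; positivity
    have hF2 := aux_F_small hsmall hw0
    rw [hwabs] at hF2
    calc ‖w * Complex.cot w - 1 + w ^ 2 / 3‖ * η
        ≤ (2 * (2 * q * az) ^ 2) * az :=
          mul_le_mul hF2 haz h1.le (by positivity)
      _ ≤ 2 * (8 * Real.pi ^ 2 * az ^ 3) := by
          rw [hπq]
          have hq24 : q ^ 2 ≤ q ^ 4 := pow_le_pow_right₀ hq1 (by norm_num)
          nlinarith [mul_le_mul_of_nonneg_right hq24 (pow_pos haz0 3).le]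
  · -- big case
    have hb : 0 < w.im := by rw [hwim]; positivity
    have hcot := aux_cot_bound hb
    rw [hwim] at hcot
    have hF2 : ‖w * Complex.cot w - 1 + w ^ 2 / 3‖
        ≤ 2 * q * az * (1 + 1 / (2 * q * η)) + 1 + (2 * q * az) ^ 2 / 3 := by
      have t1 := norm_add_le (w * Complex.cot w - 1) (w ^ 2 / 3)
      have t2 := norm_sub_le (w * Complex.cot w) 1
      have b1 : ‖w * Complex.cot w‖ ≤ 2 * q * az * (1 + 1 / (2 * q * η)) := by
        rw [norm_mul, hwabs]
        exact mul_le_mul_of_nonneg_left hcot (by positivity)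
      have b2 : ‖w ^ 2 / 3‖ = (2 * q * az) ^ 2 / 3 := by
        rw [norm_div, norm_pow, hwabs]
        norm_num
      simp only [norm_one] at t2
      rw [b2] at t1
      linarith
    rw [hwabs] at hbig
    have hη2 : η ≤ q / 2 := by linarith
    have hexp : (2 * q * az * (1 + 1 / (2 * q * η)) + 1 + (2 * q * az) ^ 2 / 3) * η
        = 2 * q * az * η + az + η + 4 * q ^ 2 * az ^ 2 * η / 3 := by
      field_simp
      ring
    calc ‖w * Complex.cot w - 1 + w ^ 2 / 3‖ * η
        ≤ (2 * q * az * (1 + 1 / (2 * q * η)) + 1 + (2 * q * az) ^ 2 / 3) * η :=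
          mul_le_mul_of_nonneg_right hF2 h1.le
      _ = 2 * q * az * η + az + η + 4 * q ^ 2 * az ^ 2 * η / 3 := hexp
      _ ≤ 2 * (8 * Real.pi ^ 2 * az ^ 3) := by
          rw [hπq]
          have hbig' : (1:ℝ) ≤ 2 * q * az := hbig.le
          have hsq : (1:ℝ) ≤ (2 * q * az) ^ 2 := by
            simpa using pow_le_pow_left₀ zero_le_one hbig' 2
          have hcb : (1:ℝ) ≤ (2 * q * az) ^ 3 := by
            simpa using pow_le_pow_left₀ zero_le_one hbig' 3
          have hq24 : q ^ 2 ≤ q ^ 4 := pow_le_pow_right₀ hq1 (by norm_num)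
          have A1 : 2 * q * az * η ≤ 4 * q ^ 4 * az ^ 3 := by
            calc 2 * q * az * η ≤ 2 * q * az * (q / 2) :=
                  mul_le_mul_of_nonneg_left hη2 (by positivity)
              _ = q ^ 2 * az := by ring
              _ ≤ q ^ 2 * az * (2 * q * az) ^ 2 := le_mul_of_one_le_right (by positivity) hsq
              _ = 4 * q ^ 4 * az ^ 3 := by ring
          have A2 : az ≤ 4 * q ^ 4 * az ^ 3 := by
            calc az ≤ az * (2 * q * az) ^ 2 := le_mul_of_one_le_right haz0.le hsq
              _ = 4 * q ^ 2 * az ^ 3 := by ring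
              _ ≤ 4 * q ^ 4 * az ^ 3 := by nlinarith [mul_le_mul_of_nonneg_right hq24 (pow_pos haz0 3).le]
          have A3 : η ≤ 4 * q ^ 4 * az ^ 3 := by
            calc η ≤ q / 2 := hη2
              _ ≤ q / 2 * (2 * q * az) ^ 3 := le_mul_of_one_le_right (by positivity) hcb
              _ = 4 * q ^ 4 * az ^ 3 := by ring
          have A4 : 4 * q ^ 2 * az ^ 2 * η / 3 ≤ 2 * q ^ 4 * az ^ 3 := by
            have hppos : (0:ℝ) < q ^ 4 * az ^ 3 := by positivity
            calc 4 * q ^ 2 * az ^ 2 * η / 3 ≤ 4 * q ^ 2 * az ^ 2 * (q / 2) / 3 := by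
                  have := mul_le_mul_of_nonneg_left hη2 (show (0:ℝ) ≤ 4 * q ^ 2 * az ^ 2 by positivity)
                  linarith
              _ = 2 / 3 * q ^ 3 * az ^ 2 := by ring
              _ ≤ 2 / 3 * q ^ 3 * az ^ 2 * (2 * q * az) := le_mul_of_one_le_right (by positivity) hbig'
              _ = 4 / 3 * (q ^ 4 * az ^ 3) := by ring
              _ ≤ 2 * q ^ 4 * az ^ 3 := by linarith
          linarith

/-- For every `R > 0` there is `A > 0` with `|B(t+iη)| ≤ A η⁻¹ e^{t/R}` for all `t > 0`
and all `η ∈ (0, √π/2)`. -/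
theorem borelB_upper_half_plane_bound (R : ℝ) (hR : 0 < R) :
    ∃ A : ℝ, 0 < A ∧
      ∀ t : ℝ, 0 < t → ∀ η : ℝ, η ∈ Set.Ioo 0 (Real.sqrt Real.pi / 2) →
        ‖borelB ((t : ℂ) + (η : ℂ) * Complex.I)‖ ≤
          A * η⁻¹ * Real.exp (t / R) := by
  refine ⟨2, by norm_num, fun t ht η hη => ?_⟩
  obtain ⟨hη1, hη2⟩ := hη
  have key := borelB_key ht hη1 hη2
  have hexp : 1 ≤ Real.exp (t / R) := Real.one_le_exp (by positivity)
  calc ‖borelB ((t : ℂ) + (η : ℂ) * Complex.I)‖ ≤ 2 / η := key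
    _ = 2 * η⁻¹ * 1 := by ring
    _ ≤ 2 * η⁻¹ * Real.exp (t / R) := by
        apply mul_le_mul_of_nonneg_left hexp
        positivity
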